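/- For every y ∈ ℂ \ {0} and every λ ∈ ℂ, P_p(y + y^{−1}; λ) = (a_0 + λ) + Σ_{r=1}^{p} a_r (y^r + y^{−r}). In particular, y ≠ 0 solves the characteristic equation (a_0 + λ) + Σ_{r=1}^{p} a_r (y^r + y^{−r}) = 0 of the recurrence L_p v + λ v = 0 if and only if z = y + y^{−1} is a root of P_p(·; λ). -/

import Mathlib

/-- coefficient of z^(n-2j) in y^n + y^{-n} -/
def Ccoef (n j : ℕ) : ℤ :=
  if 2*j ≤ n then
    (-1)^j * ((n-j).choose j + if j = 0 then 0 else (n-j-1).choose (j-1))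
  else 0

lemma Ccoef_zero (n : ℕ) : Ccoef n 0 = 1 := by simp [Ccoef]

lemma Ccoef_succ_def (n j : ℕ) (h : 2*(j+1) ≤ n) :
    Ccoef n (j+1) = (-1)^(j+1) * ((n-(j+1)).choose (j+1) + (n-(j+1)-1).choose j) := by
  simp [Ccoef, h]

lemma Ccoef_of_gt {n j : ℕ} (h : n < 2*j) : Ccoef n j = 0 := by
  rw [Ccoef, if_neg (by omega)]

lemma Ccoef_diag (l : ℕ) (hl : 1 ≤ l) : Ccoef (2*l) l = (-1)^l * 2 := by
  obtain ⟨j, rfl⟩ : ∃ j, l = j + 1 := ⟨l - 1, by omega⟩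
  rw [Ccoef_succ_def _ _ (by omega)]
  have e1 : 2*(j+1)-(j+1) = j+1 := by omega
  have e2 : 2*(j+1)-(j+1)-1 = j := by omega
  rw [e2, e1, Nat.choose_self, Nat.choose_self]
  ring

lemma Ccoef_pascal (n j : ℕ) (hn : 1 ≤ n) :
    Ccoef (n+2) (j+1) = Ccoef (n+1) (j+1) - Ccoef n j := by
  rcases lt_or_ge (n+1) (2*j) with hbig | h1
  · rw [Ccoef_of_gt (by omega), Ccoef_of_gt (by omega), Ccoef_of_gt (by omega)]; ring
  rcases eq_or_lt_of_le h1 with heq | h2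
  · -- 2j = n+1
    rw [Ccoef_of_gt (by omega), Ccoef_of_gt (by omega), Ccoef_of_gt (by omega)]; ring
  -- 2j ≤ n
  have h2n : 2*j ≤ n := by omega
  rcases eq_or_lt_of_le h2n with heq | hlt
  · -- 2j = n, j ≥ 1
    have hj : 1 ≤ j := by omega
    rw [Ccoef_of_gt (by omega : n+1 < 2*(j+1)),
        show n+2 = 2*(j+1) by omega, show n = 2*j by omega,
        Ccoef_diag _ (by omega), Ccoef_diag _ hj]
    ring
  -- 2j < n
  rcases Nat.eq_zero_or_pos j with rfl | hj
  · rw [Ccoef_zero, Ccoef_succ_def _ _ (by omega), Ccoef_succ_def _ _ (by omega)]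
    simp [Nat.choose_one_right]
    ring
  · obtain ⟨i, rfl⟩ : ∃ i, j = i + 1 := ⟨j - 1, by omega⟩
    obtain ⟨e, rfl⟩ : ∃ e, n = (i+1) + e + 1 := ⟨n - i - 2, by omega⟩
    rw [Ccoef_succ_def _ _ (by omega), Ccoef_succ_def _ _ (by omega),
        Ccoef_succ_def _ _ (by omega)]
    have e1 : (i+1)+e+1+2-(i+1+1) = e+2 := by omega
    have e2 : (i+1)+e+1+2-(i+1+1)-1 = e+1 := by omega
    have e3 : (i+1)+e+1+1-(i+1+1) = e+1 := by omega
    have e4 : (i+1)+e+1+1-(i+1+1)-1 = e := by omega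
    have e5 : (i+1)+e+1-(i+1) = e+1 := by omega
    have e6 : (i+1)+e+1-(i+1)-1 = e := by omega
    rw [e2, e1, e4, e3, e6, e5]
    have p1 : (e+2).choose (i+2) = (e+1).choose (i+1) + (e+1).choose (i+2) :=
      Nat.choose_succ_succ' _ _
    have p2 : (e+1).choose (i+1) = e.choose i + e.choose (i+1) :=
      Nat.choose_succ_succ' _ _
    push_cast [p1, p2]
    ring

section
variable (y : ℂ)

lemma core (hy : y ≠ 0) : ∀ n : ℕ, 1 ≤ n →
    y^n + y⁻¹^n = ∑ j ∈ Finset.range (n+1), (Ccoef n j : ℂ) * (y+y⁻¹)^(n-2*j) := by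
  intro n
  induction n using Nat.strong_induction_on with
  | _ n ih =>
    intro hn
    match n, hn with
    | 1, _ =>
      rw [Finset.sum_range_succ, Finset.sum_range_succ, Finset.sum_range_zero,
        Ccoef_zero, Ccoef_of_gt (by omega)]
      norm_num
    | 2, _ =>
      rw [Finset.sum_range_succ, Finset.sum_range_succ, Finset.sum_range_succ,
        Finset.sum_range_zero, Ccoef_zero, Ccoef_of_gt (by omega : (2:ℕ) < 2*2),
        show Ccoef 2 1 = (-1)^1*2 from Ccoef_diag 1 le_rfl]
      have : y⁻¹ ≠ 0 := inv_ne_zero hy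
      have hyy : y * y⁻¹ = 1 := mul_inv_cancel₀ hy
      field_simp
      linear_combination (-(1 + y*y⁻¹)*(1+y^2)^2) * hyy
    | (k+3), _ =>
      set z := y + y⁻¹ with hz
      have hrec : y^(k+3) + y⁻¹^(k+3)
          = z * (y^(k+2) + y⁻¹^(k+2)) - (y^(k+1) + y⁻¹^(k+1)) := by
        have h2 : y⁻¹ ≠ 0 := inv_ne_zero hy
        rw [hz]; field_simp; linear_combination (y⁻¹^k*(y⁻¹^2 - y*y⁻¹)) * (mul_inv_cancel₀ hy)
      rw [hrec, ih (k+2) (by omega) (by omega), ih (k+1) (by omega) (by omega)]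
      have hmul : z * ∑ j ∈ Finset.range (k+3), (Ccoef (k+2) j : ℂ) * z^(k+2-2*j)
          = ∑ j ∈ Finset.range (k+3), (Ccoef (k+2) j : ℂ) * z^(k+3-2*j) := by
        rw [Finset.mul_sum]
        refine Finset.sum_congr rfl fun j hj => ?_
        rcases le_or_gt (2*j) (k+2) with h | h
        · rw [show k+3-2*j = (k+2-2*j)+1 by omega, pow_succ]; ring
        · rw [Ccoef_of_gt h]; simp
      rw [hmul]
      rw [Finset.sum_range_succ' (fun j => (Ccoef (k+3) j : ℂ) * z^(k+3-2*j)) (k+3),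
          Finset.sum_range_succ' (fun j => (Ccoef (k+2) j : ℂ) * z^(k+3-2*j)) (k+2),
          Finset.sum_range_succ (fun j => (Ccoef (k+3) (j+1) : ℂ) * z^(k+3-2*(j+1))) (k+2)]
      have htop : (Ccoef (k+3) (k+2+1) : ℂ) * z^(k+3-2*(k+2+1)) = 0 := by
        rw [Ccoef_of_gt (by omega)]; simp
      rw [htop, add_zero, Ccoef_zero, Ccoef_zero]
      have hpt : ∀ j ∈ Finset.range (k+2),
          (Ccoef (k+3) (j+1) : ℂ) * z^(k+3-2*(j+1))
          = (Ccoef (k+2) (j+1) : ℂ) * z^(k+3-2*(j+1))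
            - (Ccoef (k+1) j : ℂ) * z^(k+1-2*j) := by
        intro j hj
        have e : k+3-2*(j+1) = k+1-2*j := by omega
        rw [e, Ccoef_pascal (k+1) j (by omega)]
        push_cast
        ring
      rw [Finset.sum_congr rfl hpt, Finset.sum_sub_distrib]
      push_cast
      ring
end
lemma lemA (k l : ℕ) (hk : 1 ≤ k) (hkl : k ≤ l) :
    k * ((l+k).choose (2*k) + (l+k-1).choose (2*k)) = l * ((l+k-1).choose (2*k-1)) := by
  have h1 := Nat.choose_succ_right_eq (l+k-1) (2*k-1)
  rw [show 2*k-1+1 = 2*k by omega, show l+k-1-(2*k-1) = l-k by omega] at h1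
  have h2 : (l+k).choose (2*k) = (l+k-1).choose (2*k-1) + (l+k-1).choose (2*k) := by
    rw [show l+k = (l+k-1)+1 by omega, show 2*k = (2*k-1)+1 by omega]
    exact Nat.choose_succ_succ' _ _
  rw [h2]
  zify [hkl] at h1 ⊢
  linear_combination h1

lemma lemB (k l : ℕ) (hkl : k ≤ l) :
    (2*k+1) * ((l+k+1).choose (2*k+1) + (l+k).choose (2*k+1))
      = (2*l+1) * ((l+k).choose (2*k)) := by
  have h1 := Nat.choose_succ_right_eq (l+k) (2*k)
  rw [show l+k-2*k = l-k by omega] at h1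
  have h2 : (l+k+1).choose (2*k+1) = (l+k).choose (2*k) + (l+k).choose (2*k+1) :=
    Nat.choose_succ_succ' _ _
  rw [h2]
  zify [hkl] at h1 ⊢
  linear_combination 2*h1

lemma even_coef (l k : ℕ) (hk : 1 ≤ k) (hkl : k ≤ l) :
    (Ccoef (2*l) (l-k) : ℂ)
      = (-1)^(l-k) * ((l+k-1).choose (2*k-1) : ℂ) * ((l:ℂ) / (k:ℂ)) := by
  have hkC : (k:ℂ) ≠ 0 := Nat.cast_ne_zero.mpr (by omega)
  have hA := lemA k l hk hkl
  have hAc : ((k:ℂ)) * (((l+k).choose (2*k) : ℂ) + ((l+k-1).choose (2*k) : ℂ))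
      = (l:ℂ) * ((l+k-1).choose (2*k-1) : ℂ) := by exact_mod_cast hA
  rcases Nat.lt_or_ge k l with hlt | hge
  · obtain ⟨j, hj⟩ : ∃ j, l - k = j + 1 := ⟨l-k-1, by omega⟩
    rw [hj, Ccoef_succ_def _ _ (by omega)]
    rw [show 2*l-(j+1)-1 = l+k-1 by omega, show 2*l-(j+1) = l+k by omega]
    have s1 : (l+k).choose (j+1) = (l+k).choose (2*k) := by
      rw [show j+1 = (l+k)-(2*k) by omega]
      exact Nat.choose_symm (by omega)
    have s2 : (l+k-1).choose j = (l+k-1).choose (2*k) := by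
      rw [show j = (l+k-1)-(2*k) by omega]
      exact Nat.choose_symm (by omega)
    rw [s1, s2, ← hj]
    push_cast
    field_simp
    linear_combination hAc
  · have hlk : l = k := le_antisymm hge hkl
    subst hlk
    rw [show l-l = 0 by omega, Ccoef_zero, show l+l-1 = 2*l-1 by omega, Nat.choose_self]
    have hlC : (l:ℂ) ≠ 0 := Nat.cast_ne_zero.mpr (by omega)
    rw [div_self hlC]
    norm_num

lemma odd_coef (l k : ℕ) (hkl : k ≤ l) :
    (Ccoef (2*l+1) (l-k) : ℂ)
      = (-1)^(l-k) * ((l+k).choose (2*k) : ℂ) * ((2*(l:ℂ)+1) / (2*(k:ℂ)+1)) := by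
  have hkC : (2*(k:ℂ)+1) ≠ 0 := by
    have h : ((2*k+1 : ℕ) : ℂ) ≠ 0 := Nat.cast_ne_zero.mpr (by omega)
    push_cast at h
    exact h
  have hB := lemB k l hkl
  have hBc : (2*(k:ℂ)+1) * (((l+k+1).choose (2*k+1) : ℂ) + ((l+k).choose (2*k+1) : ℂ))
      = (2*(l:ℂ)+1) * ((l+k).choose (2*k) : ℂ) := by exact_mod_cast hB
  rcases Nat.lt_or_ge k l with hlt | hge
  · obtain ⟨j, hj⟩ : ∃ j, l - k = j + 1 := ⟨l-k-1, by omega⟩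
    rw [hj, Ccoef_succ_def _ _ (by omega)]
    rw [show 2*l+1-(j+1)-1 = l+k by omega, show 2*l+1-(j+1) = l+k+1 by omega]
    have s1 : (l+k+1).choose (j+1) = (l+k+1).choose (2*k+1) := by
      rw [show j+1 = (l+k+1)-(2*k+1) by omega]
      exact Nat.choose_symm (by omega)
    have s2 : (l+k).choose j = (l+k).choose (2*k+1) := by
      rw [show j = (l+k)-(2*k+1) by omega]
      exact Nat.choose_symm (by omega)
    rw [s1, s2, ← hj]
    push_cast
    field_simp
    linear_combination hBc
  · have hlk : l = k := le_antisymm hge hkl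
    subst hlk
    rw [show l-l = 0 by omega, Ccoef_zero, show l+l = 2*l by ring, Nat.choose_self,
      div_self hkC]
    norm_num
lemma sum_Icc_one {M : Type*} [AddCommMonoid M] (f : ℕ → M) (l : ℕ) :
    ∑ k ∈ Finset.Icc 1 l, f k = ∑ k ∈ Finset.range l, f (k+1) := by
  rw [← Finset.Ico_add_one_right_eq_Icc, Finset.sum_Ico_eq_sum_range]
  simp [add_comm]

lemma split_sum (p : ℕ) (f : ℕ → ℂ) :
    ∑ r ∈ Finset.Icc 1 p, f r
      = ∑ l ∈ Finset.Icc 1 (p/2), f (2*l) + ∑ l ∈ Finset.range ((p+1)/2), f (2*l+1) := by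
  induction p with
  | zero => simp
  | succ p ih =>
    rw [Finset.sum_Icc_succ_top (by omega), ih]
    rcases Nat.even_or_odd (p+1) with ⟨m, hm⟩ | ⟨m, hm⟩
    · have h1 : (p+1)/2 = m := by omega
      have h2 : p/2 = m-1 := by omega
      have h3 : (p+1+1)/2 = m := by omega
      have hm1 : 1 ≤ m := by omega
      rw [h1, h2, h3, show m = (m-1)+1 by omega,
        Finset.sum_Icc_succ_top (by omega) (fun l => f (2*l)),
        show 2*((m-1)+1) = p+1 by omega, show (m-1)+1-1 = m-1 by omega]
      ring
    · have h1 : (p+1)/2 = m := by omega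
      have h2 : p/2 = m := by omega
      have h3 : (p+1+1)/2 = m+1 := by omega
      rw [h1, h2, h3, Finset.sum_range_succ (fun l => f (2*l+1)) m,
        show 2*m+1 = p+1 by omega]
      ring

lemma even_block (y : ℂ) (hy : y ≠ 0) (l : ℕ) (hl : 1 ≤ l) :
    y^(2*l) + y⁻¹^(2*l)
      = 2*(-1:ℂ)^l + ∑ k ∈ Finset.Icc 1 l,
          (-1:ℂ)^(l-k) * (((l+k-1).choose (2*k-1) : ℕ) : ℂ) * ((l:ℂ)/(k:ℂ))
            * (y+y⁻¹)^(2*k) := by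
  set z := y + y⁻¹ with hz
  rw [core y hy (2*l) (by omega)]
  have hshrink : ∑ j ∈ Finset.range (l+1), (Ccoef (2*l) j : ℂ) * z^(2*l-2*j)
      = ∑ j ∈ Finset.range (2*l+1), (Ccoef (2*l) j : ℂ) * z^(2*l-2*j) := by
    apply Finset.sum_subset (Finset.range_subset_range.mpr (by omega))
    intro j hj1 hj2
    simp only [Finset.mem_range] at hj1 hj2
    rw [Ccoef_of_gt (by omega)]
    simp
  rw [← hshrink,
    ← Finset.sum_range_reflect (fun j => (Ccoef (2*l) j : ℂ) * z^(2*l-2*j)) (l+1),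
    Finset.sum_range_succ'
      (fun j => (Ccoef (2*l) (l+1-1-j) : ℂ) * z^(2*l-2*(l+1-1-j))) l,
    sum_Icc_one (fun k => (-1:ℂ)^(l-k) * (((l+k-1).choose (2*k-1) : ℕ) : ℂ)
      * ((l:ℂ)/(k:ℂ)) * z^(2*k)) l]
  rw [add_comm]
  congr 1
  · rw [show l+1-1-0 = l by omega, show 2*l-2*l = 0 by omega, Ccoef_diag l hl]
    push_cast
    ring
  · refine Finset.sum_congr rfl fun k hk => ?_
    simp only [Finset.mem_range] at hk
    rw [show l+1-1-(k+1) = l-(k+1) by omega]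
    rw [show 2*l-2*(l-(k+1)) = 2*(k+1) by omega]
    rw [even_coef l (k+1) (by omega) (by omega)]

lemma odd_block (y : ℂ) (hy : y ≠ 0) (l : ℕ) :
    y^(2*l+1) + y⁻¹^(2*l+1)
      = ∑ k ∈ Finset.range (l+1),
          (-1:ℂ)^(l-k) * (((l+k).choose (2*k) : ℕ) : ℂ)
            * ((2*(l:ℂ)+1)/(2*(k:ℂ)+1)) * (y+y⁻¹)^(2*k+1) := by
  set z := y + y⁻¹ with hz
  rw [core y hy (2*l+1) (by omega)]
  have hshrink : ∑ j ∈ Finset.range (l+1), (Ccoef (2*l+1) j : ℂ) * z^(2*l+1-2*j)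
      = ∑ j ∈ Finset.range (2*l+1+1), (Ccoef (2*l+1) j : ℂ) * z^(2*l+1-2*j) := by
    apply Finset.sum_subset (Finset.range_subset_range.mpr (by omega))
    intro j hj1 hj2
    simp only [Finset.mem_range] at hj1 hj2
    rw [Ccoef_of_gt (by omega)]
    simp
  rw [← hshrink,
    ← Finset.sum_range_reflect (fun j => (Ccoef (2*l+1) j : ℂ) * z^(2*l+1-2*j)) (l+1)]
  refine Finset.sum_congr rfl fun k hk => ?_
  simp only [Finset.mem_range] at hk
  rw [show l+1-1-k = l-k by omega]
  rw [show 2*l+1-2*(l-k) = 2*k+1 by omega]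
  rw [odd_coef l k (by omega)]
/-- Coefficients `b_r(λ)` of the characteristic polynomial `P_p(·;λ)` associated with the
symmetric finite difference stencil `a`. -/
noncomputable def bcoef (p : ℕ) (a : ℤ → ℝ) (lam : ℂ) (r : ℕ) : ℂ :=
  if r = 0 then
    ((a 0 : ℂ) + lam) + 2 * ∑ l ∈ Finset.Icc 1 (p / 2), (-1 : ℂ) ^ l * (a (2 * l) : ℂ)
  else if r % 2 = 0 then
    ∑ l ∈ Finset.Icc (r / 2) (p / 2),
      (-1 : ℂ) ^ (l - r / 2) * (Nat.choose (l + r / 2 - 1) (2 * (r / 2) - 1) : ℂ) *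
        ((l : ℂ) / ((r / 2 : ℕ) : ℂ)) * (a (2 * l) : ℂ)
  else
    ∑ l ∈ Finset.Icc (r / 2) ((p + 1) / 2 - 1),
      (-1 : ℂ) ^ (l - r / 2) * (Nat.choose (l + r / 2) (2 * (r / 2)) : ℂ) *
        ((2 * (l : ℂ) + 1) / (2 * ((r / 2 : ℕ) : ℂ) + 1)) * (a (2 * l + 1) : ℂ)

/-- The polynomial `P_p(z;λ) = Σ_{r=0}^p b_r(λ) z^r`. -/
noncomputable def Ppoly (p : ℕ) (a : ℤ → ℝ) (lam z : ℂ) : ℂ :=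
  ∑ r ∈ Finset.range (p + 1), bcoef p a lam r * z ^ r

lemma bcoef_zero_eq (p : ℕ) (a : ℤ → ℝ) (lam : ℂ) :
    bcoef p a lam 0
      = ((a 0 : ℂ) + lam) + 2 * ∑ l ∈ Finset.Icc 1 (p/2), (-1:ℂ)^l * (a (2*l) : ℂ) := by
  rw [bcoef, if_pos rfl]

lemma bcoef_even_eq (p : ℕ) (a : ℤ → ℝ) (lam : ℂ) (k : ℕ) (hk : 1 ≤ k) :
    bcoef p a lam (2*k)
      = ∑ l ∈ Finset.Icc k (p/2),
          (-1:ℂ)^(l-k) * (Nat.choose (l+k-1) (2*k-1) : ℂ) * ((l:ℂ)/(k:ℂ)) * (a (2*l) : ℂ) := by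
  have h2 : 2*k/2 = k := by omega
  have h3 : 2*k % 2 = 0 := by omega
  rw [bcoef, if_neg (by omega), if_pos h3, h2]

lemma bcoef_odd_eq (p : ℕ) (a : ℤ → ℝ) (lam : ℂ) (k : ℕ) :
    bcoef p a lam (2*k+1)
      = ∑ l ∈ Finset.Icc k ((p+1)/2 - 1),
          (-1:ℂ)^(l-k) * (Nat.choose (l+k) (2*k) : ℂ)
            * ((2*(l:ℂ)+1)/(2*(k:ℂ)+1)) * (a (2*l+1) : ℂ) := by
  have h2 : (2*k+1)/2 = k := by omega
  have h3 : ¬ ((2*k+1) % 2 = 0) := by omega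
  rw [bcoef, if_neg (by omega), if_neg h3, h2]

/-- substituting `z = y + y⁻¹` in `P_p(·;λ)` recovers the characteristic
equation of the recurrence `L_p v + λ v = 0`. -/
theorem stmt2 (p : ℕ) (hp : 1 ≤ p) (h : ℝ) (hh : 0 < h)
    (a : ℤ → ℝ) (hsym : ∀ r : ℤ, a (-r) = a r)
    (y : ℂ) (hy : y ≠ 0) (lam : ℂ) :
    (Ppoly p a lam (y + y⁻¹) =
      ((a 0 : ℂ) + lam) +
        ∑ r ∈ Finset.Icc 1 p, (a r : ℂ) * (y ^ (r : ℤ) + y ^ (-(r : ℤ)))) ∧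
    ((((a 0 : ℂ) + lam) +
        ∑ r ∈ Finset.Icc 1 p, (a r : ℂ) * (y ^ (r : ℤ) + y ^ (-(r : ℤ))) = 0) ↔
      Ppoly p a lam (y + y⁻¹) = 0) := by
  have hmain : Ppoly p a lam (y + y⁻¹) =
      ((a 0 : ℂ) + lam) +
        ∑ r ∈ Finset.Icc 1 p, (a r : ℂ) * (y ^ (r : ℤ) + y ^ (-(r : ℤ))) := by
    set z := y + y⁻¹ with hz
    -- Right-hand side: split into even and odd indices
    have hR : ∑ r ∈ Finset.Icc 1 p, (a r : ℂ) * (y ^ (r : ℤ) + y ^ (-(r : ℤ)))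
        = ∑ l ∈ Finset.Icc 1 (p/2), (a (2*l) : ℂ) * (y^(2*l) + y⁻¹^(2*l))
          + ∑ l ∈ Finset.range ((p+1)/2), (a (2*l+1) : ℂ) * (y^(2*l+1) + y⁻¹^(2*l+1)) := by
      rw [split_sum p (fun r => (a r : ℂ) * (y ^ (r : ℤ) + y ^ (-(r : ℤ))))]
      congr 1
      · refine Finset.sum_congr rfl fun l hl => ?_
        rw [zpow_natCast, zpow_neg, zpow_natCast, inv_pow]
        push_cast
        ring
      · refine Finset.sum_congr rfl fun l hl => ?_
        rw [zpow_natCast, zpow_neg, zpow_natCast, inv_pow]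
        push_cast
        ring
    -- Left-hand side: peel off r = 0 and split
    have hL0 : Ppoly p a lam z
        = bcoef p a lam 0 + ∑ r ∈ Finset.Icc 1 p, bcoef p a lam r * z^r := by
      rw [Ppoly, Finset.range_eq_Ico,
        ← Finset.sum_Ico_consecutive _ (by omega : (0:ℕ) ≤ 1) (by omega : 1 ≤ p+1),
        Finset.Ico_add_one_right_eq_Icc]
      norm_num
    rw [hL0, split_sum p (fun r => bcoef p a lam r * z^r)]
    -- even part
    have hEven : ∑ l ∈ Finset.Icc 1 (p/2), bcoef p a lam (2*l) * z^(2*l)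
        = ∑ l ∈ Finset.Icc 1 (p/2),
            ∑ k ∈ Finset.Icc 1 l,
              ((-1:ℂ)^(l-k) * (Nat.choose (l+k-1) (2*k-1) : ℂ) * ((l:ℂ)/(k:ℂ))
                * (a (2*l) : ℂ)) * z^(2*k) := by
      rw [show ∑ l ∈ Finset.Icc 1 (p/2), bcoef p a lam (2*l) * z^(2*l)
          = ∑ k ∈ Finset.Icc 1 (p/2), ∑ l ∈ Finset.Icc k (p/2),
              ((-1:ℂ)^(l-k) * (Nat.choose (l+k-1) (2*k-1) : ℂ) * ((l:ℂ)/(k:ℂ))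
                * (a (2*l) : ℂ)) * z^(2*k) from ?_]
      · exact Finset.sum_comm' (fun k l => by simp [Finset.mem_Icc]; omega)
      · refine Finset.sum_congr rfl fun k hk => ?_
        simp only [Finset.mem_Icc] at hk
        rw [bcoef_even_eq p a lam k hk.1, Finset.sum_mul]
    have hOdd : ∑ l ∈ Finset.range ((p+1)/2), bcoef p a lam (2*l+1) * z^(2*l+1)
        = ∑ l ∈ Finset.range ((p+1)/2),
            ∑ k ∈ Finset.range (l+1),
              ((-1:ℂ)^(l-k) * (Nat.choose (l+k) (2*k) : ℂ)
                * ((2*(l:ℂ)+1)/(2*(k:ℂ)+1)) * (a (2*l+1) : ℂ)) * z^(2*k+1) := by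
      rw [show ∑ l ∈ Finset.range ((p+1)/2), bcoef p a lam (2*l+1) * z^(2*l+1)
          = ∑ k ∈ Finset.range ((p+1)/2), ∑ l ∈ Finset.Icc k ((p+1)/2-1),
              ((-1:ℂ)^(l-k) * (Nat.choose (l+k) (2*k) : ℂ)
                * ((2*(l:ℂ)+1)/(2*(k:ℂ)+1)) * (a (2*l+1) : ℂ)) * z^(2*k+1) from ?_]
      · exact Finset.sum_comm' (fun k l => by
          simp [Finset.mem_Icc, Finset.mem_range]; omega)
      · refine Finset.sum_congr rfl fun k hk => ?_
        rw [bcoef_odd_eq p a lam k, Finset.sum_mul]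
    rw [hEven, hOdd, hR, bcoef_zero_eq]
    rw [Finset.mul_sum]
    have hfin : ∀ l ∈ Finset.Icc 1 (p/2),
        2 * ((-1:ℂ)^l * (a (2*l) : ℂ))
          + ∑ k ∈ Finset.Icc 1 l,
              ((-1:ℂ)^(l-k) * (Nat.choose (l+k-1) (2*k-1) : ℂ) * ((l:ℂ)/(k:ℂ))
                * (a (2*l) : ℂ)) * z^(2*k)
        = (a (2*l) : ℂ) * (y^(2*l) + y⁻¹^(2*l)) := by
      intro l hl
      simp only [Finset.mem_Icc] at hl
      rw [even_block y hy l hl.1, mul_add, Finset.mul_sum]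
      congr 1
      · ring
      · exact Finset.sum_congr rfl fun k hk => by ring
    have hfin2 : ∀ l ∈ Finset.range ((p+1)/2),
        ∑ k ∈ Finset.range (l+1),
            ((-1:ℂ)^(l-k) * (Nat.choose (l+k) (2*k) : ℂ)
              * ((2*(l:ℂ)+1)/(2*(k:ℂ)+1)) * (a (2*l+1) : ℂ)) * z^(2*k+1)
        = (a (2*l+1) : ℂ) * (y^(2*l+1) + y⁻¹^(2*l+1)) := by
      intro l hl
      rw [odd_block y hy l, Finset.mul_sum]
      exact Finset.sum_congr rfl fun k hk => by ring
    have hcomb : ∑ l ∈ Finset.Icc 1 (p/2), 2 * ((-1:ℂ)^l * (a (2*l) : ℂ))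
        + ∑ l ∈ Finset.Icc 1 (p/2),
            ∑ k ∈ Finset.Icc 1 l,
              ((-1:ℂ)^(l-k) * (Nat.choose (l+k-1) (2*k-1) : ℂ) * ((l:ℂ)/(k:ℂ))
                * (a (2*l) : ℂ)) * z^(2*k)
        = ∑ l ∈ Finset.Icc 1 (p/2), (a (2*l) : ℂ) * (y^(2*l) + y⁻¹^(2*l)) := by
      rw [← Finset.sum_add_distrib]
      exact Finset.sum_congr rfl hfin
    have hcomb2 := Finset.sum_congr rfl hfin2
    linear_combination hcomb + hcomb2
  exact ⟨hmain, by rw [hmain]⟩
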